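/- (Lower bound on effective capacity, eq. (13)) Let (Ω, ℱ, μ) be a probability space and let S, I : Ω → ℝ be independent nonnegative random variables with I integrable. Let a > 0, θ > 0, and β = θ·T_f·BW·log₂(e) with T_f > 0 and BW > 0 such that 0 < β ≤ 1. Set EC(θ) = −(1/θ)·log E[(1 + S/(I + a))^(−β)] and EC_LB(θ) = −(1/θ)·log E[(1 + S/(E[I] + a))^(−β)]. Then EC_LB(θ) ≤ EC(θ). -/

import Mathlib

open MeasureTheory Set

/-- convexity of `x ↦ (x + d)⁻¹` on `Ici 0` for `d > 0`. -/
lemma aux_convexOn_inv_shift {d : ℝ} (hd : 0 < d) :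
    ConvexOn ℝ (Ici 0) (fun x : ℝ => (x + d)⁻¹) := by
  have h := convexOn_zpow (𝕜 := ℝ) (-1)
  refine ⟨convex_Ici 0, fun x hx y hy p q hp hq hpq => ?_⟩
  have hx' : x + d ∈ Ioi (0:ℝ) := by simp only [mem_Ioi]; have := mem_Ici.mp hx; linarith
  have hy' : y + d ∈ Ioi (0:ℝ) := by simp only [mem_Ioi]; have := mem_Ici.mp hy; linarith
  have h2 := h.2 hx' hy' hp hq hpq
  simp only [smul_eq_mul, zpow_neg, zpow_one] at h2 ⊢
  have heq : p * (x + d) + q * (y + d) = p * x + q * y + d := by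
    have : p * (x + d) + q * (y + d) = p * x + q * y + (p + q) * d := by ring
    rw [this, hpq, one_mul]
  rwa [heq] at h2

/-- concavity of `x ↦ 1 + -(c * (x + (a + c))⁻¹)` on `Ici 0`. -/
lemma aux_concaveOn_t {a c : ℝ} (ha : 0 < a) (hc : 0 ≤ c) :
    ConcaveOn ℝ (Ici 0) (fun x : ℝ => 1 + -(c * (x + (a + c))⁻¹)) := by
  have hconv : ConvexOn ℝ (Ici 0) (fun x : ℝ => c * (x + (a + c))⁻¹) := by
    have := (aux_convexOn_inv_shift (d := a + c) (by linarith)).smul hc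
    simpa [smul_eq_mul] using this
  have := (concaveOn_const (c := (1:ℝ)) (convex_Ici (0:ℝ))).add hconv.neg
  exact this

lemma aux_t_nonneg {a c : ℝ} (ha : 0 < a) (hc : 0 ≤ c) {x : ℝ} (hx : 0 ≤ x) :
    0 ≤ 1 + -(c * (x + (a + c))⁻¹) := by
  have hden : 0 < x + (a + c) := by linarith
  have : c * (x + (a + c))⁻¹ ≤ 1 := by
    rw [← div_eq_mul_inv, div_le_one hden]; linarith
  linarith

/-- concavity of the key function `x ↦ (1 + c/(x+a))^(-β)` on `Ici 0`. -/
lemma aux_concave_key {a c β : ℝ} (ha : 0 < a) (hc : 0 ≤ c) (hβ0 : 0 < β) (hβ1 : β ≤ 1) :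
    ConcaveOn ℝ (Ici 0) (fun x : ℝ => (1 + c / (x + a)) ^ (-β)) := by
  set t : ℝ → ℝ := fun x => 1 + -(c * (x + (a + c))⁻¹) with ht_def
  have ht : ConcaveOn ℝ (Ici 0) t := aux_concaveOn_t ha hc
  have hcomp : ConcaveOn ℝ (Ici 0) (fun x => (t x) ^ β) := by
    refine ⟨convex_Ici 0, fun x hx y hy p q hp hq hpq => ?_⟩
    have h1 := ht.2 hx hy hp hq hpq
    have htx : (0:ℝ) ≤ t x := aux_t_nonneg ha hc (mem_Ici.mp hx)
    have hty : (0:ℝ) ≤ t y := aux_t_nonneg ha hc (mem_Ici.mp hy)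
    have h2 := (Real.concaveOn_rpow hβ0.le hβ1).2 (mem_Ici.mpr htx) (mem_Ici.mpr hty)
      hp hq hpq
    have h3 : (p • t x + q • t y) ^ β ≤ (t (p • x + q • y)) ^ β := by
      apply Real.rpow_le_rpow _ h1 hβ0.le
      simp only [smul_eq_mul]
      positivity
    calc p • (t x) ^ β + q • (t y) ^ β ≤ (p • t x + q • t y) ^ β := h2
      _ ≤ (t (p • x + q • y)) ^ β := h3
  have heq : ∀ x ∈ Ici (0:ℝ), (t x) ^ β = (1 + c / (x + a)) ^ (-β) := by
    intro x hx
    have hx0 : (0:ℝ) ≤ x := hx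
    have hxa : 0 < x + a := by linarith
    have hxac : 0 < x + (a + c) := by linarith
    have h1 : (1:ℝ) + c / (x + a) = (x + (a + c)) / (x + a) := by
      field_simp; ring
    have h2 : t x = ((x + (a + c)) / (x + a))⁻¹ := by
      rw [ht_def]; simp only
      rw [inv_div]
      field_simp
      ring
    rw [h1, h2, Real.inv_rpow (by positivity), ← Real.rpow_neg (by positivity)]
  refine ⟨convex_Ici 0, fun x hx y hy p q hp hq hpq => ?_⟩
  show p • ((1 + c / (x + a)) ^ (-β)) + q • ((1 + c / (y + a)) ^ (-β))
      ≤ (1 + c / (p • x + q • y + a)) ^ (-β)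
  rw [← heq x hx, ← heq y hy, ← heq _ (convex_Ici 0 hx hy hp hq hpq)]
  exact hcomp.2 hx hy hp hq hpq

lemma aux_pos {a c z β : ℝ} (ha : 0 < a) (hc : 0 ≤ c) (hz : 0 ≤ z) (hβ0 : 0 < β) :
    0 < (1 + c / (z + a)) ^ (-β) :=
  Real.rpow_pos_of_pos (by positivity) _

lemma aux_le_one {a c z β : ℝ} (ha : 0 < a) (hc : 0 ≤ c) (hz : 0 ≤ z) (hβ0 : 0 < β) :
    (1 + c / (z + a)) ^ (-β) ≤ 1 :=
  Real.rpow_le_one_of_one_le_of_nonpos (by nlinarith [div_nonneg hc (by linarith : (0:ℝ) ≤ z + a)])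
    (by linarith)

/-- Lower bound on effective capacity (eq. (13)): EC_LB(θ) ≤ EC(θ). -/
theorem ec_lower_bound {Ω : Type*} [MeasurableSpace Ω] (μ : Measure Ω)
    [IsProbabilityMeasure μ] (S I : Ω → ℝ) (hS : Measurable S) (hI : Measurable I)
    (hindep : ProbabilityTheory.IndepFun S I μ)
    (hSnn : ∀ ω, 0 ≤ S ω) (hInn : ∀ ω, 0 ≤ I ω) (hIint : Integrable I μ)
    (a θ Tf BW β : ℝ) (ha : 0 < a) (hθ : 0 < θ) (hTf : 0 < Tf) (hBW : 0 < BW)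
    (hβdef : β = θ * Tf * BW * Real.logb 2 (Real.exp 1))
    (hβ0 : 0 < β) (hβ1 : β ≤ 1) :
    -(1 / θ) * Real.log (∫ ω, (1 + S ω / ((∫ ω', I ω' ∂μ) + a)) ^ (-β) ∂μ)
      ≤ -(1 / θ) * Real.log (∫ ω, (1 + S ω / (I ω + a)) ^ (-β) ∂μ) := by
  set m : ℝ := ∫ ω', I ω' ∂μ with hm_def
  have hm0 : 0 ≤ m := integral_nonneg hInn
  -- the regularized kernel
  set φ : ℝ × ℝ → ℝ := fun p => (1 + max p.1 0 / (max p.2 0 + a)) ^ (-β) with hφ_def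
  have hφ_cont : Continuous φ := by
    apply Continuous.rpow_const
    · exact continuous_const.add ((continuous_fst.max continuous_const).div
        ((continuous_snd.max continuous_const).add continuous_const)
        (fun p => by positivity))
    · intro p
      left
      have h1 : 0 ≤ max p.1 0 / (max p.2 0 + a) :=
        div_nonneg (le_max_right _ _) (by positivity)
      positivity
  have hφ_pos : ∀ p, 0 < φ p := fun p =>
    aux_pos ha (le_max_right _ _) (le_max_right _ _) hβ0
  have hφ_le : ∀ p, φ p ≤ 1 := fun p =>
    aux_le_one ha (le_max_right _ _) (le_max_right _ _) hβ0
  -- measures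
  set ρ : Measure ℝ := μ.map S with hρ_def
  set ν : Measure ℝ := μ.map I with hν_def
  haveI : IsProbabilityMeasure ρ := Measure.isProbabilityMeasure_map hS.aemeasurable
  haveI : IsProbabilityMeasure ν := Measure.isProbabilityMeasure_map hI.aemeasurable
  have hν_ae : ∀ᵐ i ∂ν, 0 ≤ i := by
    rw [hν_def]
    exact (ae_map_iff hI.aemeasurable measurableSet_Ici).mpr
      (Filter.Eventually.of_forall hInn)
  have hν_int_id : Integrable (fun i : ℝ => i) ν :=
    (integrable_map_measure aestronglyMeasurable_id hI.aemeasurable).mpr hIint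
  have hν_mean : ∫ i, i ∂ν = m := by
    have h := integral_map (φ := I) (μ := μ) hI.aemeasurable
      (f := fun x : ℝ => x) measurable_id.aestronglyMeasurable
    simpa using h
  -- the independence product identity
  have hmap : μ.map (fun ω => (S ω, I ω)) = ρ.prod ν := by
    rw [hρ_def, hν_def]
    exact (ProbabilityTheory.indepFun_iff_map_prod_eq_prod_map_map hS.aemeasurable
      hI.aemeasurable).mp hindep
  -- integrability of φ on the product
  have hφ_int : Integrable φ (ρ.prod ν) := by
    refine Integrable.mono' (integrable_const 1) hφ_cont.aestronglyMeasurable ?_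
    exact Filter.Eventually.of_forall fun p => by
      rw [Real.norm_eq_abs, abs_of_pos (hφ_pos p)]; exact hφ_le p
  -- Step A: rewrite LHS-of-inequality integral via product
  have hA : (∫ ω, (1 + S ω / (I ω + a)) ^ (-β) ∂μ) = ∫ s, ∫ i, φ (s, i) ∂ν ∂ρ := by
    have h1 : (∫ ω, (1 + S ω / (I ω + a)) ^ (-β) ∂μ) = ∫ ω, φ (S ω, I ω) ∂μ := by
      refine integral_congr_ae (Filter.Eventually.of_forall fun ω => ?_)
      simp only [hφ_def, max_eq_left (hSnn ω), max_eq_left (hInn ω)]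
    rw [h1, ← integral_map (hS.prodMk hI).aemeasurable hφ_cont.aestronglyMeasurable,
      hmap, integral_prod φ hφ_int]
  -- Step B: Jensen for each s
  have hB : ∀ s : ℝ, ∫ i, φ (s, i) ∂ν ≤ φ (s, m) := by
    intro s
    set c : ℝ := max s 0 with hc_def
    have hc : 0 ≤ c := le_max_right _ _
    set g : ℝ → ℝ := fun i => (1 + c / (i + a)) ^ (-β) with hg_def
    have hgφ : ∀ i : ℝ, 0 ≤ i → φ (s, i) = g i := by
      intro i hi
      simp only [hφ_def, hg_def, max_eq_left hi, hc_def]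
    have hg_cont : ContinuousOn g (Ici 0) := by
      apply ContinuousOn.rpow_const
      · exact continuousOn_const.add (continuousOn_const.div
          (continuousOn_id.add continuousOn_const)
          (fun x hx => by have : (0:ℝ) ≤ x := hx; positivity))
      · intro x hx
        left
        have hx0 : (0:ℝ) ≤ x := hx
        have h1 : 0 ≤ c / (x + a) := div_nonneg hc (by positivity)
        positivity
    have hgi : Integrable (fun i => g (id i)) ν := by
      refine Integrable.congr (f := fun i => φ (s, i)) ?_ ?_
      · refine Integrable.mono' (integrable_const 1)
          (hφ_cont.comp (continuous_const.prodMk continuous_id)).aestronglyMeasurable ?_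
        exact Filter.Eventually.of_forall fun i => by
          rw [Real.norm_eq_abs, abs_of_pos (hφ_pos _)]; exact hφ_le _
      · filter_upwards [hν_ae] with i hi
        exact hgφ i hi
    have hjen : (∫ i, g (id i) ∂ν) ≤ g (∫ i, id i ∂ν) := by
      refine ConcaveOn.le_map_integral (aux_concave_key ha hc hβ0 hβ1) hg_cont isClosed_Ici
        ?_ hν_int_id hgi
      · filter_upwards [hν_ae] with i hi
        exact hi
    simp only [id] at hjen
    rw [hν_mean] at hjen
    calc (∫ i, φ (s, i) ∂ν) = ∫ i, g i ∂ν := by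
          refine integral_congr_ae ?_
          filter_upwards [hν_ae] with i hi
          exact hgφ i hi
      _ ≤ g m := hjen
      _ = φ (s, m) := (hgφ m hm0).symm
  -- Step C: compare the outer integrals
  have hC : (∫ s, ∫ i, φ (s, i) ∂ν ∂ρ) ≤ ∫ s, φ (s, m) ∂ρ := by
    refine integral_mono ?_ ?_ hB
    · exact hφ_int.integral_prod_left
    · refine Integrable.mono' (integrable_const 1)
        (hφ_cont.comp (continuous_id.prodMk continuous_const)).aestronglyMeasurable ?_
      exact Filter.Eventually.of_forall fun s => by
        rw [Real.norm_eq_abs, abs_of_pos (hφ_pos _)]; exact hφ_le _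
  -- Step D: rewrite RHS integral
  have hD : (∫ s, φ (s, m) ∂ρ) = ∫ ω, (1 + S ω / (m + a)) ^ (-β) ∂μ := by
    have h1 : (∫ s, φ (s, m) ∂ρ) = ∫ ω, φ (S ω, m) ∂μ :=
      integral_map (φ := S) (μ := μ) hS.aemeasurable
        (f := fun s => φ (s, m))
        (hφ_cont.comp (continuous_id.prodMk continuous_const)).aestronglyMeasurable
    rw [h1]
    refine integral_congr_ae (Filter.Eventually.of_forall fun ω => ?_)
    simp only [hφ_def, max_eq_left (hSnn ω), max_eq_left hm0]
  -- positivity of the smaller integral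
  have hAmeas : (fun ω => (1 + S ω / (I ω + a)) ^ (-β)) = fun ω => φ (S ω, I ω) := by
    funext ω
    simp only [hφ_def, max_eq_left (hSnn ω), max_eq_left (hInn ω)]
  have hAint : Integrable (fun ω => (1 + S ω / (I ω + a)) ^ (-β)) μ := by
    rw [hAmeas]
    refine Integrable.mono' (integrable_const 1)
      (hφ_cont.measurable.comp (hS.prodMk hI)).aestronglyMeasurable ?_
    exact Filter.Eventually.of_forall fun ω => by
      rw [Real.norm_eq_abs, abs_of_pos (hφ_pos _)]; exact hφ_le _
  have hApos : 0 < ∫ ω, (1 + S ω / (I ω + a)) ^ (-β) ∂μ := by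
    rw [integral_pos_iff_support_of_nonneg
      (fun ω => (aux_pos ha (hSnn ω) (hInn ω) hβ0).le) hAint]
    have : Function.support (fun ω => (1 + S ω / (I ω + a)) ^ (-β)) = Set.univ := by
      refine Set.eq_univ_of_forall fun ω => ?_
      exact (aux_pos ha (hSnn ω) (hInn ω) hβ0).ne'
    rw [this, measure_univ]
    norm_num
  have hAB : (∫ ω, (1 + S ω / (I ω + a)) ^ (-β) ∂μ)
      ≤ ∫ ω, (1 + S ω / (m + a)) ^ (-β) ∂μ := by
    rw [hA, ← hD]; exact hC
  have hlog : Real.log (∫ ω, (1 + S ω / (I ω + a)) ^ (-β) ∂μ)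
      ≤ Real.log (∫ ω, (1 + S ω / (m + a)) ^ (-β) ∂μ) :=
    Real.log_le_log hApos hAB
  have hneg : -(1 / θ) ≤ 0 := by
    have : 0 < 1 / θ := by positivity
    linarith
  exact mul_le_mul_of_nonpos_left hlog hneg
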